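/- Let ρ > 0, μ = 1/ρ, and let Y₁,Y₂,… be an infinite sequence of independent, identically distributed exponential random variables with density p(y) = ρe^{−ρy} on [0,∞); let Ȳₙ = (Y₁+⋯+Yₙ)/n. Then for every fixed λ ∈ (0,1), the limit as n → ∞ of (−ln Pr[Ȳₙ ≤ λμ]) / (n·G(λ)) equals 1, where G(λ) = λ − 1 − ln λ. -/

import Mathlib

open MeasureTheory ProbabilityTheory Real Filter Set
open scoped ENNReal

lemma my_conv_pdf (n : ℕ) (hn : 1 ≤ n) (r : ℝ) (hr : 0 < r) (s : ℝ) :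
    ∫⁻ y, gammaPDF n r (s - y) * exponentialPDF r y
      = gammaPDF (n + 1 : ℕ) r s := by
  rcases lt_or_ge s 0 with hs | hs
  · rw [gammaPDF_of_neg (by push_cast; linarith)]
    rw [← lintegral_zero (μ := (volume : Measure ℝ))]
    congr 1; ext y
    rcases lt_or_ge y 0 with hy | hy
    · rw [exponentialPDF_of_neg hy, mul_zero]
    · rw [gammaPDF_of_neg (by linarith), zero_mul]
  · -- s ≥ 0
    set C : ℝ := r ^ n / Real.Gamma n * Real.exp (-(r * s)) * r with hC
    set ψ : ℝ → ℝ := fun y => C * (s - y) ^ (n - 1) with hψ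
    have hcont : Continuous ψ := by fun_prop
    have hGpos : 0 < Real.Gamma n := Real.Gamma_pos_of_pos (by exact_mod_cast hn)
    have hCpos : 0 < C := by positivity
    have hind : ∀ y, (gammaPDF n r (s - y) * exponentialPDF r y)
        = ENNReal.ofReal ((Icc 0 s).indicator ψ y) := by
      intro y
      rcases lt_or_ge y 0 with hy | hy
      · rw [exponentialPDF_of_neg hy, mul_zero, Set.indicator_of_notMem (by simp [hy.not_ge]),
          ENNReal.ofReal_zero]
      rcases lt_or_ge s y with hy2 | hy2
      · rw [gammaPDF_of_neg (by linarith), zero_mul, Set.indicator_of_notMem (by simp [hy2.not_ge]),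
          ENNReal.ofReal_zero]
      · rw [Set.indicator_of_mem (by exact ⟨hy, hy2⟩)]
        have hsy : (0:ℝ) ≤ s - y := by linarith
        rw [gammaPDF_of_nonneg hsy, exponentialPDF_of_nonneg hy,
          ← ENNReal.ofReal_mul (by positivity)]
        congr 1
        have h1 : (r:ℝ) ^ ((n:ℝ)) = r ^ n := by rw [Real.rpow_natCast]
        have h2 : (s - y) ^ ((n:ℝ) - 1) = (s - y) ^ (n - 1) := by
          rw [show (n:ℝ) - 1 = ((n - 1 : ℕ) : ℝ) by push_cast [hn]; ring, Real.rpow_natCast]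
        rw [h1, h2, hψ, hC]
        have : Real.exp (-(r * (s - y))) * Real.exp (-(r * y)) = Real.exp (-(r * s)) := by
          rw [← Real.exp_add]; ring_nf
        ring_nf
        rw [← this]
        ring
    simp_rw [hind]
    have hint : Integrable ((Icc 0 s).indicator ψ) := by
      exact (hcont.integrableOn_Icc).integrable_indicator measurableSet_Icc
    have hnn : ∀ z ∈ Icc 0 s, 0 ≤ ψ z := by
      intro z hz
      have h0 : (0:ℝ) ≤ s - z := by linarith [hz.2]
      exact mul_nonneg hCpos.le (pow_nonneg h0 _)
    rw [← ofReal_integral_eq_lintegral_ofReal hint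
      (ae_of_all _ fun y => Set.indicator_nonneg hnn y)]
    rw [integral_indicator measurableSet_Icc, integral_Icc_eq_integral_Ioc,
      ← intervalIntegral.integral_of_le hs]
    have : ∫ y in (0:ℝ)..s, ψ y = C * (s ^ n / n) := by
      rw [hψ]
      rw [intervalIntegral.integral_const_mul]
      rw [intervalIntegral.integral_comp_sub_left (fun x => x ^ (n-1)) s]
      simp only [sub_self, sub_zero]
      rw [integral_pow]
      congr 1
      rw [zero_pow (by omega), sub_zero, show n - 1 + 1 = n by omega, Nat.cast_sub hn]
      push_cast
      ring_nf
    rw [this, gammaPDF_of_nonneg hs]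
    congr 1
    have hΓ : Real.Gamma ((n:ℝ) + 1) = n * Real.Gamma n := by
      rw [Real.Gamma_add_one (by positivity)]
    have h1 : (r:ℝ) ^ (((n:ℕ)+1 : ℕ):ℝ) = r ^ (n+1) := by rw [Real.rpow_natCast]
    have h2 : s ^ ((((n:ℕ)+1 : ℕ):ℝ) - 1) = s ^ n := by
      rw [show (((n:ℕ)+1 : ℕ):ℝ) - 1 = ((n : ℕ) : ℝ) by push_cast; ring, Real.rpow_natCast]
    rw [h1, h2, show (((n:ℕ)+1 : ℕ):ℝ) = (n:ℝ)+1 by push_cast; ring, hΓ, hC]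
    have hn0 : ((n:ℝ)) ≠ 0 := by positivity
    field_simp
    ring

lemma my_conv_measure (n : ℕ) (hn : 1 ≤ n) (r : ℝ) (hr : 0 < r) :
    Measure.map (fun p : ℝ × ℝ => p.1 + p.2) ((gammaMeasure n r).prod (expMeasure r))
      = gammaMeasure (n + 1 : ℕ) r := by
  have hg : Measurable (gammaPDF n r) :=
    (measurable_gammaPDFReal n r).ennreal_ofReal
  have he : Measurable (exponentialPDF r) :=
    (measurable_exponentialPDFReal r).ennreal_ofReal
  have hadd : Measurable (fun p : ℝ × ℝ => p.1 + p.2) := measurable_fst.add measurable_snd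
  refine Measure.ext fun A hA => ?_
  rw [Measure.map_apply hadd hA]
  have hA' : MeasurableSet ((fun p : ℝ × ℝ => p.1 + p.2) ⁻¹' A) := hA.preimage hadd
  have hsf : SFinite (expMeasure r) := by
    have := isProbabilityMeasure_expMeasure hr
    infer_instance
  rw [Measure.prod_apply hA']
  rw [gammaMeasure, lintegral_withDensity_eq_lintegral_mul _ hg
    (measurable_measure_prodMk_left hA')]
  set ind : ℝ → ℝ≥0∞ := A.indicator (fun _ => 1) with hind
  have hindm : Measurable ind := measurable_one.indicator hA
  have hind_le : ∀ x, ind x ≤ 1 := fun x => Set.indicator_le_self' (fun _ _ => zero_le_one) x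
  have step1 : ∀ x : ℝ, expMeasure r (Prod.mk x ⁻¹' ((fun p : ℝ × ℝ => p.1 + p.2) ⁻¹' A))
      = ∫⁻ y, ind (x + y) * exponentialPDF r y := by
    intro x
    have hSm : MeasurableSet {y : ℝ | x + y ∈ A} := hA.preimage (measurable_const.add measurable_id)
    have : (Prod.mk x ⁻¹' ((fun p : ℝ × ℝ => p.1 + p.2) ⁻¹' A)) = {y : ℝ | x + y ∈ A} := rfl
    rw [this, expMeasure, gammaMeasure, withDensity_apply _ hSm, ← lintegral_indicator hSm]
    congr 1; ext y
    simp only [hind]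
    by_cases hy : x + y ∈ A
    · rw [Set.indicator_of_mem (show y ∈ {y : ℝ | x + y ∈ A} from hy),
        Set.indicator_of_mem hy, one_mul]
      rfl
    · rw [Set.indicator_of_notMem (show y ∉ {y : ℝ | x + y ∈ A} from hy),
        Set.indicator_of_notMem hy, zero_mul]
  simp_rw [step1]
  have gne : ∀ x, gammaPDF n r x ≠ ⊤ := fun x => ENNReal.ofReal_ne_top
  have ene : ∀ x, exponentialPDF r x ≠ ⊤ := fun x => ENNReal.ofReal_ne_top
  have step2 : ∫⁻ x, gammaPDF n r x * ∫⁻ y, ind (x + y) * exponentialPDF r y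
      = ∫⁻ x, ∫⁻ y, gammaPDF n r x * (ind (x + y) * exponentialPDF r y) := by
    congr 1; ext x
    rw [lintegral_const_mul' _ _ (gne x)]
  simp only [Pi.mul_apply]
  rw [step2]
  have hmeas_unc : AEMeasurable (Function.uncurry fun x y =>
      gammaPDF n r x * (ind (x + y) * exponentialPDF r y))
      ((volume : Measure ℝ).prod (volume : Measure ℝ)) := by
    apply Measurable.aemeasurable
    apply Measurable.mul
    · exact hg.comp measurable_fst
    · exact Measurable.mul (hindm.comp hadd) (he.comp measurable_snd)
  rw [lintegral_lintegral_swap hmeas_unc]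
  have step3 : ∀ y : ℝ, (∫⁻ x, gammaPDF n r x * (ind (x + y) * exponentialPDF r y))
      = ∫⁻ x, gammaPDF n r (x - y) * (ind x * exponentialPDF r y) := by
    intro y
    rw [← lintegral_add_right_eq_self
      (fun x => gammaPDF n r (x - y) * (ind x * exponentialPDF r y)) y]
    simp only [add_sub_cancel_right]
  simp_rw [step3]
  have hmeas_unc2 : AEMeasurable (Function.uncurry fun y x =>
      gammaPDF n r (x - y) * (ind x * exponentialPDF r y))
      ((volume : Measure ℝ).prod (volume : Measure ℝ)) := by
    apply Measurable.aemeasurable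
    apply Measurable.mul
    · exact hg.comp (measurable_snd.sub measurable_fst)
    · exact Measurable.mul (hindm.comp measurable_snd) (he.comp measurable_fst)
  rw [lintegral_lintegral_swap hmeas_unc2]
  have step4 : ∀ x : ℝ, (∫⁻ y, gammaPDF n r (x - y) * (ind x * exponentialPDF r y))
      = ind x * gammaPDF (n + 1 : ℕ) r x := by
    intro x
    rw [← my_conv_pdf n hn r hr x, ← lintegral_const_mul' (ind x) _
      (ne_top_of_le_ne_top ENNReal.one_ne_top (hind_le x))]
    congr 1; ext y; ring
  simp_rw [step4]
  have : ∀ x, ind x * gammaPDF (n + 1 : ℕ) r x = A.indicator (gammaPDF (n + 1 : ℕ) r) x := by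
    intro x
    by_cases hx : x ∈ A
    · rw [hind, Set.indicator_of_mem hx, Set.indicator_of_mem hx, one_mul]
    · rw [hind, Set.indicator_of_notMem hx, Set.indicator_of_notMem hx, zero_mul]
  simp_rw [this]
  rw [lintegral_indicator hA, gammaMeasure, withDensity_apply _ hA]

lemma my_sum_law {Omega : Type*} [MeasurableSpace Omega] (P : Measure Omega)
    [IsProbabilityMeasure P] (r : ℝ) (hr : 0 < r) (Y : ℕ → Omega → ℝ)
    (hmeas : ∀ i, Measurable (Y i))
    (hindep : iIndepFun Y P)
    (hdist : ∀ i, Measure.map (Y i) P = expMeasure r) :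
    ∀ n : ℕ, 1 ≤ n →
      Measure.map (fun ω => ∑ i ∈ Finset.range n, Y i ω) P = gammaMeasure n r := by
  intro n
  induction n with
  | zero => intro h; omega
  | succ n ih =>
    intro _
    rcases Nat.eq_or_lt_of_le (Nat.one_le_iff_ne_zero.mpr (Nat.succ_ne_zero n)) with h1 | h1
    · -- n + 1 = 1, i.e. n = 0
      have hn0 : n = 0 := by omega
      subst hn0
      have he : (fun ω => ∑ i ∈ Finset.range (0+1), Y i ω) = Y 0 := by
        ext ω; simp
      rw [he, hdist 0, expMeasure]
      norm_num
    · have hn1 : 1 ≤ n := by omega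
      have hS : Measurable (fun ω => ∑ i ∈ Finset.range n, Y i ω) := by
        apply Finset.measurable_sum
        exact fun i _ => hmeas i
      have hIndep : IndepFun (fun ω => ∑ i ∈ Finset.range n, Y i ω) (Y n) P := by
        have := hindep.indepFun_finsetSum_of_notMem hmeas
          (s := Finset.range n) (i := n) (by simp)
        have he : (∑ j ∈ Finset.range n, Y j) = fun ω => ∑ i ∈ Finset.range n, Y i ω := by
          ext ω; simp [Finset.sum_apply]
        rwa [he] at this
      have hpair : Measure.map
          (fun ω => ((∑ i ∈ Finset.range n, Y i ω), Y n ω)) P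
          = (gammaMeasure n r).prod (expMeasure r) := by
        rw [(indepFun_iff_map_prod_eq_prod_map_map hS.aemeasurable
          (hmeas n).aemeasurable).mp hIndep, ih hn1, hdist n]
      have hadd : Measurable (fun p : ℝ × ℝ => p.1 + p.2) := measurable_fst.add measurable_snd
      have : (fun ω => ∑ i ∈ Finset.range (n+1), Y i ω)
          = (fun p : ℝ × ℝ => p.1 + p.2) ∘ (fun ω => ((∑ i ∈ Finset.range n, Y i ω), Y n ω)) := by
        ext ω; simp [Finset.sum_range_succ]
      rw [this, ← Measure.map_map hadd (hS.prodMk (hmeas n)), hpair,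
        my_conv_measure n hn1 r hr]

lemma my_fact_lower (n : ℕ) : (n : ℝ) ^ n ≤ (n.factorial : ℝ) * Real.exp 1 ^ n := by
  induction n with
  | zero => simp
  | succ n ih =>
    have hkey : ((n : ℝ) + 1) ^ n ≤ (n : ℝ) ^ n * Real.exp 1 := by
      rcases Nat.eq_zero_or_pos n with h0 | hpos
      · subst h0; simpa using Real.one_le_exp zero_le_one
      · have hn : (0:ℝ) < n := by exact_mod_cast hpos
        have h1 : (n : ℝ) + 1 ≤ (n : ℝ) * Real.exp (1 / n) := by
          have := Real.add_one_le_exp (1 / (n:ℝ))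
          calc (n:ℝ) + 1 = (n:ℝ) * (1/(n:ℝ) + 1) := by field_simp; ring
          _ ≤ (n:ℝ) * Real.exp (1/(n:ℝ)) := by
              apply mul_le_mul_of_nonneg_left _ hn.le
              linarith
        calc ((n:ℝ)+1)^n ≤ ((n:ℝ) * Real.exp (1/(n:ℝ)))^n := by
              apply pow_le_pow_left₀ (by positivity) h1
        _ = (n:ℝ)^n * Real.exp (1/(n:ℝ)) ^ n := by rw [mul_pow]
        _ = (n:ℝ)^n * Real.exp 1 := by
              rw [← Real.exp_nat_mul]
              congr 1
              field_simp
    have hnn : (0:ℝ) ≤ (n:ℝ) + 1 := by positivity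
    calc (((n+1):ℕ) : ℝ) ^ (n+1) = ((n:ℝ)+1) * ((n:ℝ)+1)^n := by push_cast; ring
    _ ≤ ((n:ℝ)+1) * ((n:ℝ)^n * Real.exp 1) := by
        exact mul_le_mul_of_nonneg_left hkey hnn
    _ ≤ ((n:ℝ)+1) * (((n.factorial : ℝ) * Real.exp 1 ^ n) * Real.exp 1) := by
        apply mul_le_mul_of_nonneg_left _ hnn
        exact mul_le_mul_of_nonneg_right ih (Real.exp_pos 1).le
    _ = ((n+1).factorial : ℝ) * Real.exp 1 ^ (n+1) := by
        rw [Nat.factorial_succ]; push_cast; ring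

lemma my_fact_upper (n : ℕ) (hn : 1 ≤ n) :
    (n.factorial : ℝ) * Real.exp 1 ^ n ≤ Real.exp 1 * n * (n : ℝ) ^ n := by
  induction n with
  | zero => omega
  | succ n ih =>
    rcases Nat.eq_zero_or_pos n with h0 | hpos
    · subst h0; norm_num [Real.exp_pos]
    · have hn' : (0:ℝ) < n := by exact_mod_cast hpos
      have ihh := ih hpos
      have hkey : Real.exp 1 * (n:ℝ) ^ (n+1) ≤ ((n:ℝ)+1) ^ (n+1) := by
        have h1 : Real.exp (1 / ((n:ℝ)+1)) ≤ ((n:ℝ)+1) / n := by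
          have hlog : Real.log ((n:ℝ)/((n:ℝ)+1)) ≤ (n:ℝ)/((n:ℝ)+1) - 1 :=
            Real.log_le_sub_one_of_pos (by positivity)
          have h2 : (1:ℝ) / ((n:ℝ)+1) ≤ Real.log (((n:ℝ)+1)/n) := by
            have hinv : ((n:ℝ)+1)/n = ((n:ℝ)/((n:ℝ)+1))⁻¹ := by
              rw [inv_div]
            rw [hinv, Real.log_inv]
            have heq : (n:ℝ)/((n:ℝ)+1) - 1 = -(1/((n:ℝ)+1)) := by field_simp; ring
            linarith
          calc Real.exp (1/((n:ℝ)+1)) ≤ Real.exp (Real.log (((n:ℝ)+1)/n)) :=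
                Real.exp_le_exp.mpr h2
          _ = ((n:ℝ)+1)/n := Real.exp_log (by positivity)
        have h3 : Real.exp 1 ≤ (((n:ℝ)+1)/n) ^ (n+1) := by
          calc Real.exp 1 = Real.exp (1/((n:ℝ)+1)) ^ (n+1) := by
                rw [← Real.exp_nat_mul]; congr 1; push_cast; field_simp
          _ ≤ (((n:ℝ)+1)/n) ^ (n+1) :=
                pow_le_pow_left₀ (Real.exp_pos _).le h1 _
        calc Real.exp 1 * (n:ℝ)^(n+1) ≤ (((n:ℝ)+1)/n)^(n+1) * (n:ℝ)^(n+1) :=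
              mul_le_mul_of_nonneg_right h3 (by positivity)
        _ = ((n:ℝ)+1)^(n+1) := by rw [div_pow]; field_simp
      calc ((n+1).factorial : ℝ) * Real.exp 1 ^ (n+1)
          = (((n:ℝ))+1) * Real.exp 1 * ((n.factorial : ℝ) * Real.exp 1 ^ n) := by
            rw [Nat.factorial_succ]; push_cast; ring
      _ ≤ (((n:ℝ))+1) * Real.exp 1 * (Real.exp 1 * n * (n:ℝ)^n) := by
            apply mul_le_mul_of_nonneg_left ihh (by positivity)
      _ = (((n:ℝ))+1) * Real.exp 1 * (Real.exp 1 * (n:ℝ)^(n+1)) := by ring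
      _ ≤ (((n:ℝ))+1) * Real.exp 1 * (((n:ℝ)+1)^(n+1)) := by
            apply mul_le_mul_of_nonneg_left hkey (by positivity)
      _ = Real.exp 1 * (((n:ℕ)+1:ℕ):ℝ) * (((n:ℕ)+1:ℕ):ℝ)^(n+1) := by push_cast; ring

lemma my_mono (k : ℕ) (r t x : ℝ) (hr : 0 < r) (hx : 0 ≤ x) (hxt : x ≤ t)
    (hk : r * t ≤ k) :
    x ^ k * Real.exp (-(r * x)) ≤ t ^ k * Real.exp (-(r * t)) := by
  rcases eq_or_lt_of_le (hx.trans hxt) with ht0 | ht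
  · have hx0 : x = 0 := le_antisymm (hxt.trans ht0.symm.le) hx
    rw [← ht0, hx0]
  · have hv : x * Real.exp ((t - x)/t) ≤ t := by
      have h1 : x/t ≤ Real.exp (x/t - 1) := by
        have := Real.add_one_le_exp (x/t - 1); linarith
      have h2 : x ≤ t * Real.exp (x/t - 1) := by
        calc x = (x/t) * t := by field_simp
        _ ≤ Real.exp (x/t - 1) * t := mul_le_mul_of_nonneg_right h1 ht.le
        _ = t * Real.exp (x/t - 1) := by ring
      calc x * Real.exp ((t-x)/t)
          ≤ (t * Real.exp (x/t - 1)) * Real.exp ((t-x)/t) :=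
            mul_le_mul_of_nonneg_right h2 (Real.exp_pos _).le
      _ = t * Real.exp ((x/t - 1) + (t-x)/t) := by rw [Real.exp_add]; ring
      _ = t * Real.exp 0 := by
            congr 2
            field_simp
            ring
      _ = t := by simp
    have hstep : x ^ k * Real.exp (r*(t-x)) ≤ t ^ k := by
      calc x ^ k * Real.exp (r*(t-x)) ≤ x ^ k * Real.exp ((k:ℝ)*((t-x)/t)) := by
            apply mul_le_mul_of_nonneg_left _ (pow_nonneg hx k)
            apply Real.exp_le_exp.mpr
            have hr2 : r ≤ (k:ℝ)/t := by rw [le_div_iff₀ ht]; linarith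
            calc r*(t-x) ≤ ((k:ℝ)/t)*(t-x) :=
                  mul_le_mul_of_nonneg_right hr2 (by linarith)
            _ = (k:ℝ)*((t-x)/t) := by ring
      _ = (x * Real.exp ((t-x)/t)) ^ k := by
            rw [mul_pow, ← Real.exp_nat_mul]
      _ ≤ t ^ k := pow_le_pow_left₀ (by positivity) hv k
    calc x^k * Real.exp (-(r*x)) = (x^k * Real.exp (r*(t-x))) * Real.exp (-(r*t)) := by
          rw [mul_assoc, ← Real.exp_add]
          congr 2
          ring
    _ ≤ t^k * Real.exp (-(r*t)) := mul_le_mul_of_nonneg_right hstep (Real.exp_pos _).le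

lemma my_gammaPDFReal_nat (n : ℕ) (hn : 1 ≤ n) (r x : ℝ) (hx : 0 ≤ x) :
    gammaPDFReal n r x = r ^ n / Real.Gamma n * x ^ (n-1) * Real.exp (-(r*x)) := by
  rw [gammaPDFReal, if_pos hx, Real.rpow_natCast,
    show (n:ℝ) - 1 = ((n - 1 : ℕ) : ℝ) by push_cast [hn]; ring, Real.rpow_natCast]

lemma my_tail_upper (n : ℕ) (hn : 1 ≤ n) (r lam : ℝ) (hr : 0 < r) (hlam : 0 < lam)
    (hmode : (n:ℝ) * lam ≤ (n:ℝ) - 1) :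
    (gammaMeasure n r (Iic ((n:ℝ) * lam / r))).toReal
      ≤ ((n:ℝ) * lam) ^ n * Real.exp (-((n:ℝ)*lam)) / Real.Gamma n := by
  have hn' : (0:ℝ) < n := by exact_mod_cast hn
  set t : ℝ := (n:ℝ) * lam / r with hTdef
  have ht : 0 < t := by positivity
  have hrt : r * t = (n:ℝ) * lam := by rw [hTdef]; field_simp
  have hG : 0 < Real.Gamma n := Real.Gamma_pos_of_pos hn'
  set M : ℝ := r ^ n / Real.Gamma n * t ^ (n-1) * Real.exp (-(r*t)) with hM
  have hMnn : 0 ≤ M := by positivity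
  have key : gammaMeasure n r (Iic t) ≤ ENNReal.ofReal (M * t) := by
    rw [gammaMeasure, withDensity_apply _ measurableSet_Iic,
      lintegral_Iic_eq_lintegral_Iio_add_Icc _ ht.le,
      lintegral_gammaPDF_of_nonpos le_rfl, zero_add]
    calc ∫⁻ x in Icc 0 t, gammaPDF n r x ≤ ∫⁻ _ in Icc 0 t, ENNReal.ofReal M := by
          apply setLIntegral_mono measurable_const
          intro x hx
          rw [gammaPDF, my_gammaPDFReal_nat n hn r x hx.1]
          apply ENNReal.ofReal_le_ofReal
          rw [hM, mul_assoc, mul_assoc]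
          apply mul_le_mul_of_nonneg_left _ (by positivity)
          have hk : r * t ≤ ((n-1:ℕ):ℝ) := by push_cast [hn]; rw [hrt]; linarith
          exact my_mono (n-1) r t x hr hx.1 hx.2 hk
    _ = ENNReal.ofReal M * ENNReal.ofReal t := by
          rw [setLIntegral_const, Real.volume_Icc, sub_zero]
    _ = ENNReal.ofReal (M * t) := by rw [ENNReal.ofReal_mul hMnn]
  have := isProbabilityMeasure_gammaMeasure (show (0:ℝ) < n from hn') hr
  calc (gammaMeasure n r (Iic t)).toReal ≤ (ENNReal.ofReal (M * t)).toReal :=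
        ENNReal.toReal_mono ENNReal.ofReal_ne_top key
  _ = M * t := ENNReal.toReal_ofReal (by positivity)
  _ = ((n:ℝ) * lam) ^ n * Real.exp (-((n:ℝ)*lam)) / Real.Gamma n := by
      rw [hM, hrt]
      have hpow : t ^ (n-1) * t = t ^ n := by
        rw [← pow_succ]; congr 1; omega
      calc r ^ n / Real.Gamma n * t ^ (n-1) * Real.exp (-((n:ℝ)*lam)) * t
          = (r ^ n * t ^ n) * Real.exp (-((n:ℝ)*lam)) / Real.Gamma n := by
            rw [← hpow]; ring
      _ = ((n:ℝ)*lam) ^ n * Real.exp (-((n:ℝ)*lam)) / Real.Gamma n := by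
            rw [← mul_pow, hrt]

lemma my_tail_lower (n : ℕ) (hn : 1 ≤ n) (r lam lam' : ℝ) (hr : 0 < r)
    (h0 : 0 < lam') (h1 : lam' < lam) :
    ((n:ℝ))^n * lam'^(n-1) * (lam - lam') * Real.exp (-((n:ℝ)*lam)) / Real.Gamma n
      ≤ (gammaMeasure n r (Iic ((n:ℝ) * lam / r))).toReal := by
  have hn' : (0:ℝ) < n := by exact_mod_cast hn
  have hlam : 0 < lam := h0.trans h1
  set t : ℝ := (n:ℝ) * lam / r with hTdef
  set t' : ℝ := (n:ℝ) * lam' / r with hT'def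
  have ht : 0 < t := by positivity
  have ht' : 0 < t' := by positivity
  have htt' : t' ≤ t := by
    rw [hTdef, hT'def]
    gcongr
  have hG : 0 < Real.Gamma n := Real.Gamma_pos_of_pos hn'
  set m : ℝ := r ^ n / Real.Gamma n * t' ^ (n-1) * Real.exp (-(r*t)) with hm
  have hrt : r * t = (n:ℝ) * lam := by rw [hTdef]; field_simp
  have hmnn : 0 ≤ m := by positivity
  have key : ENNReal.ofReal (m * (t - t')) ≤ gammaMeasure n r (Iic t) := by
    have hsub : Icc t' t ⊆ Iic t := Icc_subset_Iic_self
    have step : ENNReal.ofReal (m * (t - t')) ≤ gammaMeasure n r (Icc t' t) := by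
      rw [gammaMeasure, withDensity_apply _ measurableSet_Icc]
      have : ENNReal.ofReal (m * (t - t')) = ∫⁻ _ in Icc t' t, ENNReal.ofReal m := by
        rw [setLIntegral_const, Real.volume_Icc, ENNReal.ofReal_mul hmnn]
      rw [this]
      apply setLIntegral_mono ((measurable_gammaPDFReal _ _).ennreal_ofReal)
      intro x hx
      have hx0 : 0 ≤ x := ht'.le.trans hx.1
      rw [my_gammaPDFReal_nat n hn r x hx0]
      apply ENNReal.ofReal_le_ofReal
      rw [hm]
      have h2 : t' ^ (n-1) ≤ x ^ (n-1) := pow_le_pow_left₀ ht'.le hx.1 _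
      have h3 : Real.exp (-(r*t)) ≤ Real.exp (-(r*x)) := by
        apply Real.exp_le_exp.mpr
        have := hx.2
        nlinarith
      calc r ^ n / Real.Gamma n * t' ^ (n-1) * Real.exp (-(r*t))
          ≤ r ^ n / Real.Gamma n * x ^ (n-1) * Real.exp (-(r*t)) := by
            apply mul_le_mul_of_nonneg_right _ (Real.exp_pos _).le
            exact mul_le_mul_of_nonneg_left h2 (by positivity)
      _ ≤ r ^ n / Real.Gamma n * x ^ (n-1) * Real.exp (-(r*x)) :=
            mul_le_mul_of_nonneg_left h3 (by positivity)
    refine step.trans (measure_mono hsub)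
  have hprob := isProbabilityMeasure_gammaMeasure (show (0:ℝ) < n from hn') hr
  have hfin : gammaMeasure n r (Iic t) ≠ ⊤ := measure_ne_top _ _
  have := (ENNReal.ofReal_le_iff_le_toReal hfin).mp key
  refine le_trans (le_of_eq ?_) this
  -- m * (t - t') = stated expression
  have htt : t - t' = (n:ℝ) * (lam - lam') / r := by
    rw [hTdef, hT'def]; field_simp
  rw [hm, htt]
  have hpowt' : t' ^ (n-1) = ((n:ℝ)*lam') ^ (n-1) / r ^ (n-1) := by
    rw [hT'def, div_pow]
  rw [hpowt', hrt]
  have hrn : r ^ n = r ^ (n-1) * r := by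
    rw [← pow_succ]; congr 1; omega
  have hnn2 : ((n:ℝ)) ^ n = (n:ℝ) * (n:ℝ) ^ (n-1) := by
    rw [← pow_succ']; congr 1; omega
  rw [hnn2]
  field_simp
  rw [hrn, mul_pow]
  ring

-- Gamma n = (n-1)! for n ≥ 1
lemma my_Gamma_eq (n : ℕ) (hn : 1 ≤ n) : Real.Gamma n = ((n-1).factorial : ℝ) := by
  rw [show ((n:ℕ):ℝ) = ((n-1:ℕ):ℝ) + 1 by push_cast [hn]; ring]
  exact Real.Gamma_nat_eq_factorial (n-1)

-- log factorial bounds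
lemma my_logfact_lower (n : ℕ) (hn : 2 ≤ n) :
    ((n:ℝ)-1) * Real.log n - n ≤ Real.log (((n-1).factorial : ℕ) : ℝ) := by
  have hc : ((n-1:ℕ):ℝ) = (n:ℝ) - 1 := by
    push_cast [Nat.cast_sub (show 1 ≤ n by omega)]
    ring
  set c : ℝ := (n:ℝ) - 1 with hcdef
  have hcpos : (0:ℝ) < c := by
    have : (2:ℝ) ≤ n := by exact_mod_cast hn
    simp only [hcdef]; linarith
  have hfpos : (0:ℝ) < (((n-1).factorial : ℕ):ℝ) := by exact_mod_cast Nat.factorial_pos _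
  have h1 : ((n-1:ℕ):ℝ) ^ (n-1) ≤ (((n-1).factorial : ℕ):ℝ) * Real.exp 1 ^ (n-1) :=
    my_fact_lower (n-1)
  have hlog1 : c * Real.log c ≤ Real.log (((n-1).factorial : ℕ):ℝ) + c := by
    have h2 := Real.log_le_log (by rw [hc] at *; positivity) h1
    rw [Real.log_pow, Real.log_mul hfpos.ne' (by positivity), Real.log_pow, Real.log_exp, hc]
      at h2
    have hcc : ((n - 1 : ℕ):ℝ) = c := hc
    calc c * Real.log c = ((n-1:ℕ):ℝ) * Real.log c := by rw [hcc]
    _ ≤ Real.log (((n-1).factorial : ℕ):ℝ) + ((n-1:ℕ):ℝ) * 1 := by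
        push_cast at h2 ⊢
        rw [hc] at *
        linarith
    _ = Real.log (((n-1).factorial : ℕ):ℝ) + c := by rw [hcc, mul_one]
  have hlog2 : c * Real.log n ≤ c * Real.log c + 1 := by
    have hd : Real.log ((n:ℝ)/c) ≤ (n:ℝ)/c - 1 :=
      Real.log_le_sub_one_of_pos (by positivity)
    have hnc : (n:ℝ) = c + 1 := by simp [hcdef]
    have hdd : (n:ℝ)/c - 1 = 1/c := by
      rw [hnc]; field_simp; ring
    rw [Real.log_div (by positivity) hcpos.ne', hdd] at hd
    have hlog : Real.log n ≤ Real.log c + 1/c := by linarith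
    calc c * Real.log n ≤ c * (Real.log c + 1/c) := mul_le_mul_of_nonneg_left hlog hcpos.le
    _ = c * Real.log c + 1 := by rw [mul_add, mul_one_div, div_self hcpos.ne']
  have hn2 : (2:ℝ) ≤ (n:ℝ) := by exact_mod_cast hn
  have hnc2 : (n:ℝ) = c + 1 := by simp [hcdef]
  linarith

lemma my_logfact_upper (n : ℕ) (hn : 1 ≤ n) :
    Real.log (((n-1).factorial : ℕ) : ℝ) ≤ 1 + Real.log n + (n:ℝ) * Real.log n - n := by
  have hf1 : ((n-1).factorial : ℝ) ≤ (n.factorial : ℝ) := by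
    exact_mod_cast Nat.factorial_le (Nat.sub_le n 1)
  have hfpos : (0:ℝ) < ((n-1).factorial : ℝ) := by exact_mod_cast Nat.factorial_pos _
  have hnpos : (0:ℝ) < n := by exact_mod_cast hn
  have h2 := my_fact_upper n hn
  have hlog2 : Real.log (n.factorial : ℝ) + n ≤ 1 + Real.log n + (n:ℝ) * Real.log n := by
    have := Real.log_le_log (by positivity) h2
    rw [Real.log_mul (by positivity) (by positivity), Real.log_pow, Real.log_exp] at this
    rw [Real.log_mul (mul_pos (Real.exp_pos 1) hnpos).ne' (pow_pos hnpos n).ne',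
      Real.log_mul (Real.exp_pos 1).ne' hnpos.ne', Real.log_exp, Real.log_pow] at this
    push_cast at this ⊢
    linarith
  have := Real.log_le_log hfpos hf1
  linarith

lemma my_Q_pos (n : ℕ) (hn : 1 ≤ n) (r lam : ℝ) (hr : 0 < r) (hl0 : 0 < lam) :
    0 < (gammaMeasure n r (Iic ((n:ℝ) * lam / r))).toReal := by
  have hn' : (0:ℝ) < n := by exact_mod_cast hn
  have hG : 0 < Real.Gamma n := Real.Gamma_pos_of_pos hn'
  refine lt_of_lt_of_le ?_ (my_tail_lower n hn r lam (lam/2) hr (half_pos hl0) (half_lt_self hl0))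
  have : lam - lam/2 = lam/2 := by ring
  rw [this]
  positivity

lemma my_upper_log (n : ℕ) (hn : 2 ≤ n) (r lam : ℝ) (hr : 0 < r) (hl0 : 0 < lam)
    (hmode : (1:ℝ) ≤ (n:ℝ) * (1 - lam)) :
    (n:ℝ) * (lam - 1 - Real.log lam) - Real.log n
      ≤ -Real.log ((gammaMeasure n r (Iic ((n:ℝ) * lam / r))).toReal) := by
  have hn1 : 1 ≤ n := by omega
  have hn' : (0:ℝ) < n := by exact_mod_cast hn1
  have hG : 0 < Real.Gamma n := Real.Gamma_pos_of_pos hn'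
  have hQpos := my_Q_pos n hn1 r lam hr hl0
  have hmode' : (n:ℝ) * lam ≤ (n:ℝ) - 1 := by nlinarith
  have hA := my_tail_upper n hn1 r lam hr hl0 hmode'
  have hfpos : (0:ℝ) < (((n-1).factorial : ℕ):ℝ) := by exact_mod_cast Nat.factorial_pos _
  have hlogQ : Real.log ((gammaMeasure n r (Iic ((n:ℝ) * lam / r))).toReal)
      ≤ Real.log (((n:ℝ)*lam)^n * Real.exp (-((n:ℝ)*lam)) / Real.Gamma n) :=
    Real.log_le_log hQpos hA
  have hlogF : Real.log (((n:ℝ)*lam)^n * Real.exp (-((n:ℝ)*lam)) / Real.Gamma n)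
      = (n:ℝ) * (Real.log n + Real.log lam) - (n:ℝ)*lam
        - Real.log (((n-1).factorial : ℕ):ℝ) := by
    rw [Real.log_div (by positivity) hG.ne', Real.log_mul (by positivity) (Real.exp_pos _).ne',
      Real.log_exp, Real.log_pow, Real.log_mul hn'.ne' hl0.ne', my_Gamma_eq n hn1]
    push_cast
    ring
  have hlf := my_logfact_lower n hn
  rw [hlogF] at hlogQ
  nlinarith [hlogQ, hlf]

lemma my_lower_log (n : ℕ) (hn : 1 ≤ n) (r lam δ : ℝ) (hr : 0 < r) (hl0 : 0 < lam)
    (hδ : 0 < δ) :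
    -Real.log ((gammaMeasure n r (Iic ((n:ℝ) * lam / r))).toReal)
      ≤ (n:ℝ) * ((lam - 1 - Real.log lam) + δ) + Real.log n
        + (Real.log lam - δ - Real.log (lam - lam * Real.exp (-δ)) + 1) := by
  have hn' : (0:ℝ) < n := by exact_mod_cast hn
  have hG : 0 < Real.Gamma n := Real.Gamma_pos_of_pos hn'
  set lam' : ℝ := lam * Real.exp (-δ) with hlam'def
  have hexplt : Real.exp (-δ) < 1 := by
    rw [Real.exp_lt_one_iff]
    linarith
  have h0' : 0 < lam' := by positivity
  have h1' : lam' < lam := by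
    calc lam' = lam * Real.exp (-δ) := rfl
    _ < lam * 1 := by exact mul_lt_mul_of_pos_left hexplt hl0
    _ = lam := mul_one lam
  have hB := my_tail_lower n hn r lam lam' hr h0' h1'
  have hfpos : (0:ℝ) < (((n-1).factorial : ℕ):ℝ) := by exact_mod_cast Nat.factorial_pos _
  have hBpos : 0 < ((n:ℝ))^n * lam'^(n-1) * (lam - lam') * Real.exp (-((n:ℝ)*lam)) / Real.Gamma n := by
    have : 0 < lam - lam' := by linarith
    positivity
  have hQpos : 0 < (gammaMeasure n r (Iic ((n:ℝ) * lam / r))).toReal := lt_of_lt_of_le hBpos hB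
  have hlogB : Real.log (((n:ℝ))^n * lam'^(n-1) * (lam - lam') * Real.exp (-((n:ℝ)*lam)) / Real.Gamma n)
      ≤ Real.log ((gammaMeasure n r (Iic ((n:ℝ) * lam / r))).toReal) :=
    Real.log_le_log hBpos hB
  have hc : ((n-1:ℕ):ℝ) = (n:ℝ) - 1 := by
    push_cast [Nat.cast_sub (show 1 ≤ n by omega)]
    ring
  have hloglam' : Real.log lam' = Real.log lam - δ := by
    rw [hlam'def, Real.log_mul hl0.ne' (Real.exp_pos _).ne', Real.log_exp]
    ring
  have hlogBeq : Real.log (((n:ℝ))^n * lam'^(n-1) * (lam - lam') * Real.exp (-((n:ℝ)*lam)) / Real.Gamma n)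
      = (n:ℝ)*Real.log n + ((n:ℝ)-1)*(Real.log lam - δ) + Real.log (lam - lam')
        - (n:ℝ)*lam - Real.log (((n-1).factorial : ℕ):ℝ) := by
    have hll : 0 < lam - lam' := by linarith
    rw [Real.log_div (by positivity) hG.ne',
      Real.log_mul (by positivity) (Real.exp_pos _).ne',
      Real.log_mul (by positivity) hll.ne',
      Real.log_mul (by positivity) (by positivity),
      Real.log_exp, Real.log_pow, Real.log_pow, my_Gamma_eq n hn, hc, hloglam']
    ring
  have hlf := my_logfact_upper n hn
  rw [hlogBeq] at hlogB
  nlinarith [hlogB, hlf]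

theorem exponential_lower_tail_asymptotics
    {Omega : Type*} [MeasurableSpace Omega] (P : Measure Omega) [IsProbabilityMeasure P]
    (rho : ℝ) (hrho : 0 < rho) (Y : ℕ → Omega → ℝ)
    (hmeas : ∀ i, Measurable (Y i))
    (hindep : iIndepFun Y P)
    (hdist : ∀ i, Measure.map (Y i) P = expMeasure rho)
    (mu : ℝ) (hmu : mu = 1 / rho)
    (lam : ℝ) (hlam : lam ∈ Set.Ioo (0 : ℝ) 1) :
    Tendsto (fun n : ℕ =>
        -Real.log ((P {omega | (∑ i ∈ Finset.range n, Y i omega) / n ≤ lam * mu}).toReal) /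
          ((n : ℝ) * (lam - 1 - Real.log lam)))
      atTop (nhds 1) := by
  obtain ⟨hl0, hl1⟩ := hlam
  have hGpos : 0 < lam - 1 - Real.log lam := by
    have := Real.log_lt_sub_one_of_pos hl0 (ne_of_lt hl1)
    linarith
  set G : ℝ := lam - 1 - Real.log lam with hGdef
  -- representation of the probability
  have hQrep : ∀ n : ℕ, 1 ≤ n →
      P {omega | (∑ i ∈ Finset.range n, Y i omega) / n ≤ lam * mu}
        = gammaMeasure n rho (Set.Iic ((n:ℝ) * lam / rho)) := by
    intro n hn
    have hnpos : (0:ℝ) < n := by exact_mod_cast hn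
    have hS : Measurable (fun ω => ∑ i ∈ Finset.range n, Y i ω) :=
      Finset.measurable_sum _ (fun i _ => hmeas i)
    have hset : {omega | (∑ i ∈ Finset.range n, Y i omega) / n ≤ lam * mu}
        = (fun ω => ∑ i ∈ Finset.range n, Y i ω) ⁻¹' (Set.Iic ((n:ℝ) * lam / rho)) := by
      ext ω
      simp only [Set.mem_setOf_eq, Set.mem_preimage, Set.mem_Iic]
      rw [div_le_iff₀ hnpos, hmu]
      rw [show lam * (1/rho) * (n:ℝ) = (n:ℝ) * lam / rho by field_simp]
    rw [hset, ← Measure.map_apply hS measurableSet_Iic,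
      my_sum_law P rho hrho Y hmeas hindep hdist n hn]
  -- log n / (n G) → 0
  have hL : Tendsto (fun n : ℕ => Real.log n / ((n:ℝ) * G)) atTop (nhds 0) := by
    have h0 : Tendsto (fun x : ℝ => Real.log x / x) atTop (nhds 0) :=
      Real.isLittleO_log_id_atTop.tendsto_div_nhds_zero
    have h1 : Tendsto (fun n : ℕ => Real.log n / (n:ℝ)) atTop (nhds 0) :=
      h0.comp tendsto_natCast_atTop_atTop
    have h2 := h1.mul_const (1/G)
    rw [zero_mul] at h2
    convert h2 using 2 with n
    field_simp
  have hnG : Tendsto (fun n : ℕ => (n:ℝ) * G) atTop atTop :=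
    (tendsto_natCast_atTop_atTop).atTop_mul_const hGpos
  refine tendsto_order.mpr ⟨?_, ?_⟩
  · -- lower side
    intro c hc
    have hev1 : ∀ᶠ n : ℕ in atTop, 2 ≤ n := eventually_ge_atTop 2
    have hev2 : ∀ᶠ n : ℕ in atTop, (1:ℝ) ≤ (n:ℝ) * (1 - lam) := by
      have := (tendsto_natCast_atTop_atTop (R := ℝ)).atTop_mul_const
        (show (0:ℝ) < 1 - lam by linarith)
      exact this.eventually_ge_atTop 1
    have hev3 : ∀ᶠ n : ℕ in atTop, c < 1 - Real.log n / ((n:ℝ)*G) := by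
      have h : Tendsto (fun n : ℕ => 1 - Real.log n/((n:ℝ)*G)) atTop (nhds (1 - 0)) :=
        tendsto_const_nhds.sub hL
      rw [sub_zero] at h
      exact h.eventually (eventually_gt_nhds hc)
    filter_upwards [hev1, hev2, hev3] with n h1 h2 h3
    have hnpos : (0:ℝ) < n := by
      have : (2:ℝ) ≤ n := by exact_mod_cast h1
      linarith
    have hGn : 0 < (n:ℝ)*G := by positivity
    have hup := my_upper_log n h1 rho lam hrho hl0 h2
    rw [hQrep n (by omega)]
    calc c < 1 - Real.log n / ((n:ℝ)*G) := h3
    _ = ((n:ℝ)*G - Real.log n)/((n:ℝ)*G) := by field_simp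
    _ ≤ -Real.log ((gammaMeasure n rho (Set.Iic ((n:ℝ) * lam / rho))).toReal) / ((n:ℝ)*G) :=
        (div_le_div_iff_of_pos_right hGn).mpr hup
  · -- upper side
    intro c hc
    set δ : ℝ := G * (c - 1) / 2 with hδdef
    have hδpos : 0 < δ := by
      have : 0 < c - 1 := by linarith
      positivity
    set C : ℝ := Real.log lam - δ - Real.log (lam - lam * Real.exp (-δ)) + 1 with hCdef
    have hδG : δ / G = (c-1)/2 := by
      rw [hδdef]
      field_simp
    have hU : Tendsto (fun n : ℕ => 1 + δ/G + (Real.log n/((n:ℝ)*G) + C/((n:ℝ)*G)))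
        atTop (nhds (1 + δ/G + (0 + 0))) := by
      apply tendsto_const_nhds.add
      exact hL.add (tendsto_const_nhds.div_atTop hnG)
    have hlim : 1 + δ/G + ((0:ℝ) + 0) < c := by
      rw [hδG]
      linarith
    have hev := hU.eventually (eventually_lt_nhds hlim)
    filter_upwards [eventually_ge_atTop 1, hev] with n h1 h2
    have hnpos : (0:ℝ) < n := by exact_mod_cast h1
    have hGn : 0 < (n:ℝ)*G := by positivity
    have hlow := my_lower_log n h1 rho lam δ hrho hl0 hδpos
    rw [hQrep n h1]
    calc -Real.log ((gammaMeasure n rho (Set.Iic ((n:ℝ) * lam / rho))).toReal) / ((n:ℝ)*G)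
        ≤ ((n:ℝ) * (G + δ) + Real.log n + C) / ((n:ℝ)*G) := by
          apply (div_le_div_iff_of_pos_right hGn).mpr
          exact hlow
    _ = 1 + δ/G + (Real.log n/((n:ℝ)*G) + C/((n:ℝ)*G)) := by
          field_simp
          ring
    _ < c := h2
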